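/- Let c < a < d be real numbers and set δ := (d-c)/2. Let f : ℝ → ℂ be differentiable at every point of [c,d] with derivative f' interval-integrable on [c,d], and suppose f(c) = f(d). Then f(a) = (1/(2δ)) ∫_c^d f(u) du + ∫_c^d ψ((u-a)/(2δ)) f'(u) du. -/

import Mathlib

open MeasureTheory intervalIntegral

/-- Theorem 1(III) of the paper: for `f` differentiable on `[c,d]` with integrable
derivative and `f(c) = f(d)`, `f(a) = (1/(2δ)) ∫_c^d f + ∫_c^d ψ((u-a)/(2δ)) f'(u) du`,
where `ψ(u) = u - ⌊u⌋ - 1/2` and `δ = (d-c)/2`. -/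
theorem fourier_theorem1_III (c a d : ℝ) (hca : c < a) (had : a < d)
    (δ : ℝ) (hδ : δ = (d - c) / 2)
    (f f' : ℝ → ℂ)
    (hdiff : ∀ x ∈ Set.Icc c d, HasDerivAt f (f' x) x)
    (hint : IntervalIntegrable f' volume c d)
    (hper : f c = f d) :
    f a = ((1 / (2 * δ) : ℝ) : ℂ) * (∫ u in c..d, f u)
      + (∫ u in c..d,
          (((u - a) / (2 * δ) - ⌊(u - a) / (2 * δ)⌋ - 1 / 2 : ℝ) : ℂ) * f' u) := by
  have hL0 : (0:ℝ) < d - c := by linarith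
  have h2δ : 2 * δ = d - c := by rw [hδ]; ring
  set L : ℝ := d - c with hLdef
  rw [h2δ]
  have hLne : L ≠ 0 := ne_of_gt hL0
  have hLCne : (L : ℂ) ≠ 0 := by exact_mod_cast hLne
  -- auxiliary linear functions
  set g1 : ℝ → ℂ := fun x => (((x - a) / L + 1 / 2 : ℝ) : ℂ) with hg1
  set g2 : ℝ → ℂ := fun x => (((x - a) / L - 1 / 2 : ℝ) : ℂ) with hg2
  set ψ : ℝ → ℂ := fun u => (((u - a) / L - ⌊(u - a) / L⌋ - 1 / 2 : ℝ) : ℂ) with hψ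
  have hderR : ∀ x : ℝ, HasDerivAt (fun x : ℝ => (x - a) / L) (1 / L) x := by
    intro x
    simpa using (((hasDerivAt_id x).sub_const a).div_const L)
  have hder1 : ∀ x : ℝ, HasDerivAt g1 ((1 / L : ℝ) : ℂ) x := fun x =>
    (((hderR x).add_const (1 / 2)).ofReal_comp)
  have hder2 : ∀ x : ℝ, HasDerivAt g2 ((1 / L : ℝ) : ℂ) x := fun x =>
    (((hderR x).sub_const (1 / 2)).ofReal_comp)
  -- continuity of f on [c,d]
  have hfc : ContinuousOn f (Set.Icc c d) := fun x hx =>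
    (hdiff x hx).continuousAt.continuousWithinAt
  have hsub1 : Set.uIcc c a ⊆ Set.Icc c d := by
    rw [Set.uIcc_of_le hca.le]
    exact Set.Icc_subset_Icc le_rfl had.le
  have hsub2 : Set.uIcc a d ⊆ Set.Icc c d := by
    rw [Set.uIcc_of_le had.le]
    exact Set.Icc_subset_Icc hca.le le_rfl
  have hfint1 : IntervalIntegrable f volume c a :=
    (hfc.mono hsub1).intervalIntegrable
  have hfint2 : IntervalIntegrable f volume a d :=
    (hfc.mono hsub2).intervalIntegrable
  have hf'1 : IntervalIntegrable f' volume c a := by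
    apply hint.mono_set
    rw [Set.uIcc_of_le hca.le, Set.uIcc_of_le (hca.trans had).le]
    exact Set.Icc_subset_Icc le_rfl had.le
  have hf'2 : IntervalIntegrable f' volume a d := by
    apply hint.mono_set
    rw [Set.uIcc_of_le had.le, Set.uIcc_of_le (hca.trans had).le]
    exact Set.Icc_subset_Icc hca.le le_rfl
  -- a.e. equality of ψ·f' with the linear versions on each subinterval
  have hane : ∀ᵐ x : ℝ ∂volume, x ≠ a := by
    rw [ae_iff]
    simp only [not_not, Set.setOf_eq_eq_singleton]
    exact measure_singleton a
  have heq1 : ∀ᵐ x : ℝ ∂volume, x ∈ Set.uIoc c a → ψ x * f' x = g1 x * f' x := by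
    filter_upwards [hane] with x hxa hx
    rw [Set.uIoc_of_le hca.le] at hx
    have h1 : (-1 : ℝ) ≤ (x - a) / L := by
      rw [le_div_iff₀ hL0]
      have := hx.1
      nlinarith
    have h2 : (x - a) / L < 0 := by
      apply div_neg_of_neg_of_pos _ hL0
      have := lt_of_le_of_ne hx.2 hxa
      linarith
    have hfl : ⌊(x - a) / L⌋ = -1 := by
      rw [Int.floor_eq_iff]
      constructor
      · exact_mod_cast h1
      · push_cast; linarith
    simp only [hψ, hg1, hfl]
    congr 1
    push_cast
    ring
  have heq2 : ∀ᵐ x : ℝ ∂volume, x ∈ Set.uIoc a d → ψ x * f' x = g2 x * f' x := by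
    filter_upwards with x hx
    rw [Set.uIoc_of_le had.le] at hx
    have h1 : (0 : ℝ) ≤ (x - a) / L := by
      apply div_nonneg _ hL0.le
      have := hx.1
      linarith
    have h2 : (x - a) / L < 1 := by
      rw [div_lt_one hL0]
      have := hx.2
      linarith
    have hfl : ⌊(x - a) / L⌋ = 0 := by
      rw [Int.floor_eq_iff]
      exact ⟨by exact_mod_cast h1, by push_cast; linarith⟩
    simp only [hψ, hg2, hfl, Int.cast_zero, sub_zero]
  -- integrability of ψ·f' on each subinterval
  have hcont1 : ContinuousOn g1 (Set.uIcc c a) :=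
    fun x _ => (hder1 x).continuousAt.continuousWithinAt
  have hcont2 : ContinuousOn g2 (Set.uIcc a d) :=
    fun x _ => (hder2 x).continuousAt.continuousWithinAt
  have hg1int : IntervalIntegrable (fun x => g1 x * f' x) volume c a :=
    hf'1.continuousOn_mul hcont1
  have hg2int : IntervalIntegrable (fun x => g2 x * f' x) volume a d :=
    hf'2.continuousOn_mul hcont2
  have hψint1 : IntervalIntegrable (fun x => ψ x * f' x) volume c a :=
    hg1int.congr_ae (((ae_restrict_iff' measurableSet_uIoc).2
      (heq1.mono fun x h hx => (h hx).symm)))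
  have hψint2 : IntervalIntegrable (fun x => ψ x * f' x) volume a d :=
    hg2int.congr_ae (((ae_restrict_iff' measurableSet_uIoc).2
      (heq2.mono fun x h hx => (h hx).symm)))
  -- split the integrals at a
  have hsplitf : (∫ u in c..d, f u) = (∫ u in c..a, f u) + (∫ u in a..d, f u) :=
    (integral_add_adjacent_intervals hfint1 hfint2).symm
  have hsplitψ : (∫ u in c..d, ψ u * f' u)
      = (∫ u in c..a, ψ u * f' u) + (∫ u in a..d, ψ u * f' u) :=
    (integral_add_adjacent_intervals hψint1 hψint2).symm
  -- integration by parts on each piece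
  have hdiff1 : ∀ x ∈ Set.uIcc c a, HasDerivAt f (f' x) x := fun x hx =>
    hdiff x (hsub1 hx)
  have hdiff2 : ∀ x ∈ Set.uIcc a d, HasDerivAt f (f' x) x := fun x hx =>
    hdiff x (hsub2 hx)
  have key1 : ∫ x in c..a, g1 x * f' x
      = g1 a * f a - g1 c * f c - ∫ x in c..a, ((1 / L : ℝ) : ℂ) * f x :=
    integral_mul_deriv_eq_deriv_mul (fun x _ => hder1 x) hdiff1
      intervalIntegrable_const hf'1
  have key2 : ∫ x in a..d, g2 x * f' x
      = g2 d * f d - g2 a * f a - ∫ x in a..d, ((1 / L : ℝ) : ℂ) * f x :=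
    integral_mul_deriv_eq_deriv_mul (fun x _ => hder2 x) hdiff2
      intervalIntegrable_const hf'2
  have e1 : (∫ x in c..a, ψ x * f' x) = ∫ x in c..a, g1 x * f' x :=
    integral_congr_ae heq1
  have e2 : (∫ x in a..d, ψ x * f' x) = ∫ x in a..d, g2 x * f' x :=
    integral_congr_ae heq2
  have hconst1 : (∫ x in c..a, ((1 / L : ℝ) : ℂ) * f x)
      = ((1 / L : ℝ) : ℂ) * ∫ x in c..a, f x := integral_const_mul _ _
  have hconst2 : (∫ x in a..d, ((1 / L : ℝ) : ℂ) * f x)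
      = ((1 / L : ℝ) : ℂ) * ∫ x in a..d, f x := integral_const_mul _ _
  show f a = ((1 / L : ℝ) : ℂ) * (∫ u in c..d, f u) + ∫ u in c..d, ψ u * f' u
  rw [hsplitψ, hsplitf, e1, e2, key1, key2, hconst1, hconst2, hper]
  have hdc : d - c ≠ 0 := sub_ne_zero.2 (ne_of_gt (hca.trans had))
  have s1 : g1 a = 1 / 2 := by
    simp only [hg1]; norm_num
  have s2 : g2 a = -(1 / 2) := by
    simp only [hg2]; norm_num
  have s3 : g2 d = g1 c := by
    simp only [hg1, hg2]
    norm_cast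
    rw [hLdef]
    field_simp
    ring
  rw [s1, s2, s3]
  ring
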